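/- Conditional Lindeberg bound used in the CLT for the plug-in estimator: let (X_t)_{t ≥ 1} be real-valued random variables such that for each t the law of X_t has a Lebesgue density bounded by C₀ t^{−1/2} for a constant C₀ > 0. Let k_n = [a n^κ] for constants a > 0 and κ ∈ (0, 1/8). Then (1/n) Σ_{t=1}^n E[(Σ_{i=0}^{k_n−1} ℋ_i(X_t)²)²] → 0 as n → ∞. -/

import Mathlib

open MeasureTheory Real Filter

/-- Physicists' Hermite polynomials: `H 0 = 1`, `H 1 = 2x`,
`H (i+1) = 2x * H i - 2i * H (i-1)`. -/
noncomputable def physHermite : ℕ → ℝ → ℝ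
  | 0 => fun _ => 1
  | 1 => fun x => 2 * x
  | n + 2 => fun x => 2 * x * physHermite (n + 1) x - 2 * (n + 1) * physHermite n x

/-- Hermite functions `ℋ_i(x) = (√π 2^i i!)^{-1/2} H_i(x) e^{-x²/2}`. -/
noncomputable def hermiteFun (i : ℕ) (x : ℝ) : ℝ :=
  (Real.sqrt (Real.sqrt Real.pi * 2 ^ i * Nat.factorial i))⁻¹ * physHermite i x *
    Real.exp (-x ^ 2 / 2)

lemma physHermite_zero (x : ℝ) : physHermite 0 x = 1 := rfl
lemma physHermite_one (x : ℝ) : physHermite 1 x = 2 * x := rfl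
lemma physHermite_add_two (n : ℕ) (x : ℝ) :
    physHermite (n + 2) x = 2 * x * physHermite (n + 1) x - 2 * (n + 1) * physHermite n x := rfl

lemma physHermite_succ' (n : ℕ) (x : ℝ) :
    physHermite (n + 1) x = 2 * x * physHermite n x - 2 * n * physHermite (n - 1) x := by
  cases n with
  | zero => simp [physHermite_one, physHermite_zero]
  | succ m => rw [physHermite_add_two]; push_cast; ring_nf

lemma physHermite_hasDerivAt_aux : ∀ n : ℕ,
    (∀ x : ℝ, HasDerivAt (physHermite n) (2 * n * physHermite (n - 1) x) x) ∧
    (∀ x : ℝ, HasDerivAt (physHermite (n + 1)) (2 * (n + 1) * physHermite n x) x) := by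
  intro n
  induction n with
  | zero =>
    constructor
    · intro x
      simpa [show physHermite 0 = fun _ : ℝ => (1:ℝ) from rfl] using (hasDerivAt_const x (1 : ℝ))
    · intro x
      have h : HasDerivAt (fun y : ℝ => 2 * y) 2 x := by
        simpa using (hasDerivAt_id x).const_mul (2 : ℝ)
      have hd : (physHermite 1) = fun y : ℝ => 2 * y := by funext y; rfl
      rw [hd]
      convert h using 1
      simp [physHermite_zero]
  | succ m ih =>
    constructor
    · intro x
      have := ih.2 x
      convert this using 2 <;> (push_cast; ring)
    · intro x
      have h1 := ih.1 x
      have h2 := ih.2 x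
      have hx : HasDerivAt (fun y : ℝ => 2 * y) 2 x := by
        simpa using (hasDerivAt_id x).const_mul (2 : ℝ)
      have hprod : HasDerivAt (fun y : ℝ => 2 * y * physHermite (m + 1) y)
          (2 * physHermite (m + 1) x + 2 * x * (2 * (m + 1) * physHermite m x)) x := by
        exact hx.mul h2
      have h3 : HasDerivAt (physHermite (m + 2))
          (2 * physHermite (m + 1) x + 2 * x * (2 * (m + 1) * physHermite m x)
            - 2 * (m + 1) * (2 * m * physHermite (m - 1) x)) x := by
        have hdef : physHermite (m + 2) = fun y : ℝ =>
            2 * y * physHermite (m + 1) y - 2 * ((m : ℝ) + 1) * physHermite m y := by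
          funext y; rw [physHermite_add_two]
        rw [hdef]
        exact hprod.sub (h1.const_mul (2 * ((m : ℝ) + 1)))
      convert h3 using 1
      have hs := physHermite_succ' m x
      rw [hs]; push_cast; ring

lemma physHermite_hasDerivAt (n : ℕ) (x : ℝ) :
    HasDerivAt (physHermite n) (2 * n * physHermite (n - 1) x) x :=
  (physHermite_hasDerivAt_aux n).1 x

lemma continuous_physHermite (n : ℕ) : Continuous (physHermite n) := by
  have : Differentiable ℝ (physHermite n) := fun x => (physHermite_hasDerivAt n x).differentiableAt
  exact this.continuous

lemma physHermite_abs_le : ∀ n : ℕ, ∀ x : ℝ,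
    |physHermite n x| ≤ (2 ^ n * n.factorial : ℝ) * (1 + x ^ 2) ^ n := by
  have key : ∀ n : ℕ, (∀ x : ℝ, |physHermite n x| ≤ (2 ^ n * n.factorial : ℝ) * (1 + x ^ 2) ^ n) ∧
      (∀ x : ℝ, |physHermite (n+1) x| ≤ (2 ^ (n+1) * (n+1).factorial : ℝ) * (1 + x ^ 2) ^ (n+1)) := by
    intro n
    induction n with
    | zero =>
      constructor
      · intro x; simp [physHermite_zero]
      · intro x
        rw [physHermite_one]
        have h2 : |x| ≤ 1 + x ^ 2 := by nlinarith [abs_nonneg x, sq_abs x, sq_nonneg (|x| - 1)]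
        have h1 : |2 * x| = 2 * |x| := by rw [abs_mul]; simp
        rw [h1]
        calc 2 * |x| ≤ 2 * (1 + x ^ 2) := by linarith
          _ ≤ (2 ^ 1 * (Nat.factorial 1) : ℝ) * (1 + x ^ 2) ^ 1 := by norm_num
    | succ m ih =>
      constructor
      · intro x; exact ih.2 x
      · intro x
        have h0 := ih.1 x
        have h1 := ih.2 x
        have hq : (0:ℝ) ≤ 1 + x ^ 2 := by positivity
        have hq1 : (1:ℝ) ≤ 1 + x ^ 2 := by nlinarith
        have h2x : 2 * |x| ≤ 1 + x ^ 2 := by nlinarith [sq_abs x, sq_nonneg (|x| - 1)]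
        rw [physHermite_add_two]
        set Q : ℝ := 1 + x ^ 2 with hQ
        set C1 : ℝ := (2 ^ (m+1) * (m+1).factorial : ℝ) with hC1
        set C0 : ℝ := (2 ^ m * m.factorial : ℝ) with hC0
        have hC1nn : (0:ℝ) ≤ C1 := by positivity
        have hC0nn : (0:ℝ) ≤ C0 := by positivity
        have tri : |2 * x * physHermite (m + 1) x - 2 * (↑m + 1) * physHermite m x|
            ≤ 2 * |x| * |physHermite (m+1) x| + 2 * ((m:ℝ) + 1) * |physHermite m x| := by
          have := abs_sub (2 * x * physHermite (m + 1) x) (2 * (↑m + 1) * physHermite m x)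
          calc |2 * x * physHermite (m + 1) x - 2 * (↑m + 1) * physHermite m x|
              ≤ |2 * x * physHermite (m + 1) x| + |2 * (↑m + 1) * physHermite m x| := this
            _ = 2 * |x| * |physHermite (m+1) x| + 2 * ((m:ℝ) + 1) * |physHermite m x| := by
                rw [abs_mul, abs_mul, abs_mul (2 * ((m:ℝ)+1)),
                  abs_of_nonneg (by positivity : (0:ℝ) ≤ 2 * ((m:ℝ)+1)), abs_two]
        have t1 : 2 * |x| * |physHermite (m+1) x| ≤ Q * (C1 * Q ^ (m+1)) :=
          mul_le_mul h2x h1 (abs_nonneg _) hq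
        have t2 : 2 * ((m:ℝ) + 1) * |physHermite m x| ≤ 2 * ((m:ℝ)+1) * (C0 * Q ^ m) := by
          gcongr
        have t3 : 2 * ((m:ℝ)+1) * (C0 * Q ^ m) ≤ C1 * Q ^ (m+2) := by
          have hpow : Q ^ m ≤ Q ^ (m+2) := pow_le_pow_right₀ hq1 (by omega)
          have hco : 2 * ((m:ℝ)+1) * C0 = C1 := by
            rw [hC0, hC1]
            push_cast [Nat.factorial_succ]
            ring
          calc 2 * ((m:ℝ)+1) * (C0 * Q ^ m) = (2 * ((m:ℝ)+1) * C0) * Q ^ m := by ring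
            _ = C1 * Q ^ m := by rw [hco]
            _ ≤ C1 * Q ^ (m+2) := by gcongr
        have t4 : Q * (C1 * Q ^ (m+1)) = C1 * Q ^ (m+2) := by ring
        have hfin : 2 * C1 ≤ (2 ^ (m+2) * (m+2).factorial : ℝ) := by
          rw [hC1]
          push_cast [Nat.factorial_succ]
          have hp : (0:ℝ) ≤ 2 ^ (m+1) * (((m:ℝ) + 1) * (m.factorial : ℝ)) := by positivity
          have h2p : (2:ℝ) ^ (m+2) = 2 * 2 ^ (m+1) := by ring
          have hm : (0:ℝ) ≤ (m:ℝ) := Nat.cast_nonneg m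
          rw [h2p]
          nlinarith [mul_nonneg hp (show (0:ℝ) ≤ (m:ℝ) + 1 by linarith)]
        calc |2 * x * physHermite (m + 1) x - 2 * (↑m + 1) * physHermite m x|
            ≤ Q * (C1 * Q ^ (m+1)) + 2 * ((m:ℝ)+1) * (C0 * Q ^ m) := by
              refine le_trans tri (add_le_add t1 t2)
          _ ≤ C1 * Q ^ (m+2) + C1 * Q ^ (m+2) := by rw [t4]; exact add_le_add le_rfl t3
          _ = 2 * C1 * Q ^ (m+2) := by ring
          _ ≤ (2 ^ (m+2) * (m+2).factorial : ℝ) * Q ^ (m+2) := mul_le_mul_of_nonneg_right hfin (pow_nonneg hq _)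
  intro n; exact (key n).1

lemma one_add_sq_pow_le (m : ℕ) (x : ℝ) :
    (1 + x ^ 2) ^ m ≤ (2 * m + 2 : ℝ) ^ m * Real.exp (x ^ 2 / 2) := by
  have hd : (0:ℝ) < 2 * m + 2 := by positivity
  have h1 : (1 + x ^ 2) ≤ (2 * m + 2 : ℝ) * Real.exp (x ^ 2 / (2 * m + 2)) := by
    have he := Real.add_one_le_exp (x ^ 2 / (2 * (m:ℝ) + 2))
    have hident : (2 * (m:ℝ) + 2) * (x ^ 2 / (2 * m + 2) + 1) = 2 * m + 2 + x ^ 2 := by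
      field_simp
      ring
    nlinarith [mul_le_mul_of_nonneg_left he (le_of_lt hd), Nat.cast_nonneg (α := ℝ) m]
  calc (1 + x ^ 2) ^ m ≤ ((2 * m + 2 : ℝ) * Real.exp (x ^ 2 / (2 * m + 2))) ^ m := by
        apply pow_le_pow_left₀ (by positivity) h1
    _ = (2 * m + 2 : ℝ) ^ m * Real.exp (x ^ 2 / (2 * m + 2)) ^ m := mul_pow _ _ _
    _ = (2 * m + 2 : ℝ) ^ m * Real.exp (m * (x ^ 2 / (2 * m + 2))) := by
        rw [← Real.exp_nat_mul]
    _ ≤ (2 * m + 2 : ℝ) ^ m * Real.exp (x ^ 2 / 2) := by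
        have hmono : (m : ℝ) * (x ^ 2 / (2 * m + 2)) ≤ x ^ 2 / 2 := by
          rw [← mul_div_assoc, div_le_div_iff₀ hd (by norm_num : (0:ℝ) < 2)]
          nlinarith [sq_nonneg x, Nat.cast_nonneg (α := ℝ) m]
        gcongr

/-- dominating constant -/
noncomputable def domK (m n : ℕ) : ℝ :=
  (2 ^ m * m.factorial : ℝ) * (2 ^ n * n.factorial : ℝ) * (2 * (m + n) + 2 : ℝ) ^ (m + n)

lemma abs_physHermite_mul_exp_le (m n : ℕ) (x : ℝ) :
    |physHermite m x * physHermite n x * Real.exp (-x ^ 2)| ≤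
      domK m n * Real.exp (-(1/2) * x ^ 2) := by
  have h1 := physHermite_abs_le m x
  have h2 := physHermite_abs_le n x
  have hq : (0:ℝ) ≤ 1 + x ^ 2 := by positivity
  have habs : |physHermite m x * physHermite n x * Real.exp (-x ^ 2)| =
      |physHermite m x| * |physHermite n x| * Real.exp (-x ^ 2) := by
    rw [abs_mul, abs_mul, abs_of_nonneg (Real.exp_nonneg _)]
  rw [habs]
  have step1 : |physHermite m x| * |physHermite n x| ≤
      (2 ^ m * m.factorial : ℝ) * (2 ^ n * n.factorial : ℝ) * (1 + x ^ 2) ^ (m + n) := by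
    calc |physHermite m x| * |physHermite n x|
        ≤ ((2 ^ m * m.factorial : ℝ) * (1 + x ^ 2) ^ m) *
          ((2 ^ n * n.factorial : ℝ) * (1 + x ^ 2) ^ n) :=
          mul_le_mul h1 h2 (abs_nonneg _) (by positivity)
      _ = (2 ^ m * m.factorial : ℝ) * (2 ^ n * n.factorial : ℝ) * (1 + x ^ 2) ^ (m + n) := by
          rw [pow_add]; ring
  have step2 : (1 + x ^ 2) ^ (m + n) ≤ (2 * (m + n) + 2 : ℝ) ^ (m + n) * Real.exp (x ^ 2 / 2) := by
    have := one_add_sq_pow_le (m + n) x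
    push_cast at this ⊢
    exact this
  have expid : Real.exp (x ^ 2 / 2) * Real.exp (-x ^ 2) = Real.exp (-(1/2) * x ^ 2) := by
    rw [← Real.exp_add]; ring_nf
  calc |physHermite m x| * |physHermite n x| * Real.exp (-x ^ 2)
      ≤ ((2 ^ m * m.factorial : ℝ) * (2 ^ n * n.factorial : ℝ) * (1 + x ^ 2) ^ (m + n)) *
        Real.exp (-x ^ 2) := by gcongr
    _ ≤ ((2 ^ m * m.factorial : ℝ) * (2 ^ n * n.factorial : ℝ) *
        ((2 * (m + n) + 2 : ℝ) ^ (m + n) * Real.exp (x ^ 2 / 2))) * Real.exp (-x ^ 2) := by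
        gcongr
    _ = domK m n * (Real.exp (x ^ 2 / 2) * Real.exp (-x ^ 2)) := by rw [domK]; push_cast; ring
    _ = domK m n * Real.exp (-(1/2) * x ^ 2) := by rw [expid]

lemma integrable_physHermite_mul (m n : ℕ) :
    Integrable (fun x : ℝ => physHermite m x * physHermite n x * Real.exp (-x ^ 2)) := by
  apply Integrable.mono' ((integrable_exp_neg_mul_sq (by norm_num : (0:ℝ) < 1/2)).const_mul
    (domK m n))
  · exact (((continuous_physHermite m).mul (continuous_physHermite n)).mul
      (Real.continuous_exp.comp (continuous_pow 2).neg)).aestronglyMeasurable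
  · exact Filter.Eventually.of_forall fun x => by
      rw [Real.norm_eq_abs]
      exact abs_physHermite_mul_exp_le m n x

lemma integrable_physHermite_sq (n : ℕ) :
    Integrable (fun x : ℝ => physHermite n x ^ 2 * Real.exp (-x ^ 2)) := by
  simpa [sq] using integrable_physHermite_mul n n

/-- the normalizing constant -/
noncomputable def hermN (n : ℕ) : ℝ := Real.sqrt π * 2 ^ n * n.factorial

lemma hermN_pos (n : ℕ) : 0 < hermN n := by
  have h := Real.sqrt_pos.mpr Real.pi_pos
  have h2 : (0:ℝ) < (n.factorial : ℝ) := by exact_mod_cast n.factorial_pos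
  rw [hermN]; positivity

lemma integral_physHermite_sq (n : ℕ) :
    ∫ x : ℝ, physHermite n x ^ 2 * Real.exp (-x ^ 2) = hermN n := by
  induction n with
  | zero =>
    have : (fun x : ℝ => physHermite 0 x ^ 2 * Real.exp (-x ^ 2)) =
        fun x : ℝ => Real.exp (-1 * x ^ 2) := by
      funext x; rw [physHermite_zero]; ring_nf
    rw [this, integral_gaussian]
    rw [hermN]; norm_num
  | succ n ih =>
    -- integration by parts
    have he : ∀ x : ℝ, HasDerivAt (fun y : ℝ => Real.exp (-y ^ 2))
        (Real.exp (-x ^ 2) * (-(2 * x))) x := by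
      intro x
      have hx2 : HasDerivAt (fun y : ℝ => -y ^ 2) (-(2 * x)) x := by
        exact ((hasDerivAt_pow 2 x).neg).congr_deriv (by norm_num)
      exact hx2.exp
    have hF : ∀ x : ℝ, HasDerivAt
        (fun y : ℝ => physHermite (n+1) y * physHermite n y * Real.exp (-y ^ 2))
        (2 * ((n:ℝ)+1) * (physHermite n x ^ 2 * Real.exp (-x ^ 2))
          - physHermite (n+1) x ^ 2 * Real.exp (-x ^ 2)) x := by
      intro x
      have hA := physHermite_hasDerivAt (n+1) x
      have hB := physHermite_hasDerivAt n x
      have h := (hA.mul hB).mul (he x)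
      refine h.congr_deriv ?_
      have hs := physHermite_succ' n x
      simp only [Nat.add_sub_cancel] at h
      push_cast at h ⊢
      simp only [Pi.mul_apply]
      linear_combination (Real.exp (-x ^ 2) * physHermite (n+1) x) * hs
    have hFint : Integrable
        (fun x : ℝ => physHermite (n+1) x * physHermite n x * Real.exp (-x ^ 2)) :=
      integrable_physHermite_mul (n+1) n
    have hg : Integrable
        (fun x : ℝ => 2 * ((n:ℝ)+1) * (physHermite n x ^ 2 * Real.exp (-x ^ 2))) :=
      (integrable_physHermite_sq n).const_mul _
    have hh : Integrable (fun x : ℝ => physHermite (n+1) x ^ 2 * Real.exp (-x ^ 2)) :=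
      integrable_physHermite_sq (n+1)
    have key := integral_eq_zero_of_hasDerivAt_of_integrable hF (hg.sub hh) hFint
    rw [integral_sub hg hh, MeasureTheory.integral_const_mul, ih, sub_eq_zero] at key
    rw [← key, hermN, hermN]
    push_cast [Nat.factorial_succ]
    ring

lemma hermN_succ (n : ℕ) : hermN (n + 1) = 2 * ((n:ℝ) + 1) * hermN n := by
  rw [hermN, hermN]; push_cast [Nat.factorial_succ]; ring

lemma cast_mul_hermN_pred_le (n : ℕ) : (n : ℝ) * hermN (n - 1) ≤ hermN n := by
  cases n with
  | zero => simpa using (hermN_pos 0).le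
  | succ m =>
    have h := hermN_succ m
    have hp := (hermN_pos m).le
    simp only [Nat.add_sub_cancel]
    push_cast
    nlinarith [hp]

lemma tendsto_sq_exp_atBot (n : ℕ) :
    Tendsto (fun x : ℝ => physHermite n x ^ 2 * Real.exp (-x ^ 2)) atBot (nhds 0) := by
  have hbnd : ∀ x : ℝ, ‖physHermite n x ^ 2 * Real.exp (-x ^ 2)‖ ≤
      domK n n * Real.exp (-(1/2) * x ^ 2) := by
    intro x
    rw [Real.norm_eq_abs]
    have h := abs_physHermite_mul_exp_le n n x
    have e : physHermite n x ^ 2 * Real.exp (-x ^ 2)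
        = physHermite n x * physHermite n x * Real.exp (-x ^ 2) := by ring
    rw [e]
    exact h
  have hsq : Tendsto (fun x : ℝ => x ^ 2) atBot atTop := by
    have h1 : Tendsto (fun x : ℝ => (-x) ^ 2) atBot atTop :=
      (tendsto_pow_atTop (two_ne_zero)).comp tendsto_neg_atBot_atTop
    exact h1.congr fun x => by ring
  have harg : Tendsto (fun x : ℝ => -(1/2) * x ^ 2) atBot atBot := by
    have h1 : Tendsto (fun x : ℝ => x ^ 2 * (1/2)) atBot atTop :=
      hsq.atTop_mul_const (by norm_num : (0:ℝ) < 1/2)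
    have h2 : Tendsto (fun x : ℝ => -(x ^ 2 * (1/2))) atBot atBot :=
      tendsto_neg_atTop_atBot.comp h1
    exact h2.congr fun x => by ring
  have hexp : Tendsto (fun x : ℝ => domK n n * Real.exp (-(1/2) * x ^ 2)) atBot (nhds 0) := by
    have := (Real.tendsto_exp_atBot.comp harg).const_mul (domK n n)
    simpa using this
  exact squeeze_zero_norm hbnd hexp

lemma sq_exp_hasDerivAt (n : ℕ) (x : ℝ) :
    HasDerivAt (fun y : ℝ => physHermite n y ^ 2 * Real.exp (-y ^ 2))
      ((2 * n * physHermite (n-1) x * physHermite n x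
        - physHermite n x * physHermite (n+1) x) * Real.exp (-x ^ 2)) x := by
  have he : HasDerivAt (fun y : ℝ => Real.exp (-y ^ 2)) (Real.exp (-x ^ 2) * (-(2 * x))) x := by
    have hx2 : HasDerivAt (fun y : ℝ => -y ^ 2) (-(2 * x)) x := by
      exact ((hasDerivAt_pow 2 x).neg).congr_deriv (by norm_num)
    exact hx2.exp
  have hB := physHermite_hasDerivAt n x
  have h := (hB.mul hB).mul he
  have e : (fun y : ℝ => physHermite n y ^ 2 * Real.exp (-y ^ 2))
      = fun y : ℝ => physHermite n y * physHermite n y * Real.exp (-y ^ 2) := by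
    funext y; ring
  rw [e]
  refine h.congr_deriv ?_
  have hs := physHermite_succ' n x
  simp only [Pi.mul_apply]
  linear_combination (Real.exp (-x ^ 2) * physHermite n x) * hs

/-- The integrable bound on the derivative -/
noncomputable def dbnd (n : ℕ) (x : ℝ) : ℝ :=
  (n : ℝ) * (physHermite (n-1) x ^ 2 * Real.exp (-x ^ 2))
  + (n : ℝ) * (physHermite n x ^ 2 * Real.exp (-x ^ 2))
  + (1/2) * (physHermite n x ^ 2 * Real.exp (-x ^ 2))
  + (1/2) * (physHermite (n+1) x ^ 2 * Real.exp (-x ^ 2))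

lemma dbnd_nonneg (n : ℕ) (x : ℝ) : 0 ≤ dbnd n x := by
  rw [dbnd]; positivity

lemma integrable_dbnd (n : ℕ) : Integrable (dbnd n) := by
  apply Integrable.add
  apply Integrable.add
  apply Integrable.add
  · exact (integrable_physHermite_sq (n-1)).const_mul _
  · exact (integrable_physHermite_sq n).const_mul _
  · exact (integrable_physHermite_sq n).const_mul _
  · exact (integrable_physHermite_sq (n+1)).const_mul _

lemma abs_deriv_le_dbnd (n : ℕ) (x : ℝ) :
    |(2 * n * physHermite (n-1) x * physHermite n x
      - physHermite n x * physHermite (n+1) x) * Real.exp (-x ^ 2)| ≤ dbnd n x := by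
  rw [dbnd]
  set a := physHermite (n-1) x
  set b := physHermite n x
  set c := physHermite (n+1) x
  set e := Real.exp (-x ^ 2)
  have henn : 0 ≤ e := Real.exp_nonneg _
  have hnn : (0:ℝ) ≤ (n:ℝ) := Nat.cast_nonneg n
  rw [abs_mul, abs_of_nonneg henn]
  have h1 : |2 * (n:ℝ) * a * b - b * c| ≤ (n:ℝ) * a^2 + (n:ℝ) * b^2 + (1/2) * b^2 + (1/2) * c^2 := by
    rw [abs_le]
    constructor
    · nlinarith [mul_nonneg hnn (sq_nonneg (a + b)), sq_nonneg (b - c)]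
    · nlinarith [mul_nonneg hnn (sq_nonneg (a - b)), sq_nonneg (b + c)]
  calc |2 * (n:ℝ) * a * b - b * c| * e
      ≤ ((n:ℝ) * a^2 + (n:ℝ) * b^2 + (1/2) * b^2 + (1/2) * c^2) * e := by gcongr
    _ = (n : ℝ) * (a ^ 2 * e) + (n : ℝ) * (b ^ 2 * e) + (1/2) * (b ^ 2 * e)
        + (1/2) * (c ^ 2 * e) := by ring

lemma integral_dbnd_le (n : ℕ) : ∫ x, dbnd n x ≤ 4 * ((n:ℝ) + 1) * hermN n := by
  have i1 : Integrable (fun x : ℝ => (n:ℝ) * (physHermite (n-1) x ^ 2 * Real.exp (-x ^ 2))) :=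
    (integrable_physHermite_sq (n-1)).const_mul _
  have i2 : Integrable (fun x : ℝ => (n:ℝ) * (physHermite n x ^ 2 * Real.exp (-x ^ 2))) :=
    (integrable_physHermite_sq n).const_mul _
  have i3 : Integrable (fun x : ℝ => (1/2 : ℝ) * (physHermite n x ^ 2 * Real.exp (-x ^ 2))) :=
    (integrable_physHermite_sq n).const_mul _
  have i4 : Integrable (fun x : ℝ => (1/2 : ℝ) * (physHermite (n+1) x ^ 2 * Real.exp (-x ^ 2))) :=
    (integrable_physHermite_sq (n+1)).const_mul _
  have : ∫ x, dbnd n x = (n:ℝ) * hermN (n-1) + (n:ℝ) * hermN n + (1/2) * hermN n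
      + (1/2) * hermN (n+1) := by
    have i12 : Integrable (fun x : ℝ => (n:ℝ) * (physHermite (n-1) x ^ 2 * Real.exp (-x ^ 2))
        + (n:ℝ) * (physHermite n x ^ 2 * Real.exp (-x ^ 2))) := i1.add i2
    have i123 : Integrable (fun x : ℝ => (n:ℝ) * (physHermite (n-1) x ^ 2 * Real.exp (-x ^ 2))
        + (n:ℝ) * (physHermite n x ^ 2 * Real.exp (-x ^ 2))
        + (1/2 : ℝ) * (physHermite n x ^ 2 * Real.exp (-x ^ 2))) := i12.add i3
    simp only [dbnd]
    rw [integral_add i123 i4, integral_add i12 i3, integral_add i1 i2,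
      MeasureTheory.integral_const_mul, MeasureTheory.integral_const_mul,
      MeasureTheory.integral_const_mul, MeasureTheory.integral_const_mul,
      integral_physHermite_sq, integral_physHermite_sq, integral_physHermite_sq]
  rw [this, hermN_succ]
  have h1 := cast_mul_hermN_pred_le n
  have h2 := (hermN_pos n).le
  nlinarith [mul_nonneg (Nat.cast_nonneg (α := ℝ) n) h2]

lemma physHermite_sq_exp_le (n : ℕ) (x : ℝ) :
    physHermite n x ^ 2 * Real.exp (-x ^ 2) ≤ 4 * ((n:ℝ) + 1) * hermN n := by
  have hg : Integrable (fun y : ℝ => (2 * n * physHermite (n-1) y * physHermite n y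
      - physHermite n y * physHermite (n+1) y) * Real.exp (-y ^ 2)) := by
    have : (fun y : ℝ => (2 * n * physHermite (n-1) y * physHermite n y
        - physHermite n y * physHermite (n+1) y) * Real.exp (-y ^ 2))
        = fun y => (2 * (n:ℝ)) * (physHermite (n-1) y * physHermite n y * Real.exp (-y ^ 2))
          - physHermite n y * physHermite (n+1) y * Real.exp (-y ^ 2) := by
      funext y; ring
    rw [this]
    exact ((integrable_physHermite_mul (n-1) n).const_mul _).sub
      (integrable_physHermite_mul n (n+1))
  have hftc := integral_Iic_of_hasDerivAt_of_tendsto'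
    (fun y (_ : y ∈ Set.Iic x) => sq_exp_hasDerivAt n y) hg.integrableOn (tendsto_sq_exp_atBot n)
  rw [sub_zero] at hftc
  rw [← hftc]
  have step1 : ∫ y in Set.Iic x, (2 * n * physHermite (n-1) y * physHermite n y
      - physHermite n y * physHermite (n+1) y) * Real.exp (-y ^ 2)
      ≤ ∫ y in Set.Iic x, dbnd n y := by
    apply setIntegral_mono_on hg.integrableOn (integrable_dbnd n).integrableOn measurableSet_Iic
    intro y _
    exact le_trans (le_abs_self _) (abs_deriv_le_dbnd n y)
  have step2 : ∫ y in Set.Iic x, dbnd n y ≤ ∫ y, dbnd n y :=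
    setIntegral_le_integral (integrable_dbnd n) (Filter.Eventually.of_forall (dbnd_nonneg n))
  exact le_trans step1 (le_trans step2 (integral_dbnd_le n))

lemma hermiteFun_sq (n : ℕ) (x : ℝ) :
    hermiteFun n x ^ 2 = (hermN n)⁻¹ * (physHermite n x ^ 2 * Real.exp (-x ^ 2)) := by
  have hN : (0:ℝ) ≤ Real.sqrt Real.pi * 2 ^ n * Nat.factorial n := (hermN_pos n).le
  have hexp : Real.exp (-x ^ 2 / 2) ^ 2 = Real.exp (-x ^ 2) := by
    rw [sq, ← Real.exp_add]; ring_nf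
  rw [hermiteFun, mul_pow, mul_pow, inv_pow, Real.sq_sqrt hN, hexp, hermN]
  ring

lemma continuous_hermiteFun_sq (n : ℕ) : Continuous (fun x => hermiteFun n x ^ 2) := by
  apply Continuous.pow
  exact (continuous_const.mul (continuous_physHermite n)).mul
    (Real.continuous_exp.comp ((continuous_pow 2).neg.div_const 2))

lemma hermiteFun_sq_le (n : ℕ) (x : ℝ) : hermiteFun n x ^ 2 ≤ 4 * ((n:ℝ) + 1) := by
  rw [hermiteFun_sq]
  have h := physHermite_sq_exp_le n x
  have hNpos := hermN_pos n
  calc (hermN n)⁻¹ * (physHermite n x ^ 2 * Real.exp (-x ^ 2))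
      ≤ (hermN n)⁻¹ * (4 * ((n:ℝ) + 1) * hermN n) := by gcongr
    _ = 4 * ((n:ℝ) + 1) := by field_simp
lemma integrable_hermiteFun_sq (n : ℕ) : Integrable (fun x => hermiteFun n x ^ 2) := by
  simp only [hermiteFun_sq]
  exact (integrable_physHermite_sq n).const_mul _
lemma integral_hermiteFun_sq (n : ℕ) : ∫ x, hermiteFun n x ^ 2 = 1 := by
  simp only [hermiteFun_sq]
  rw [MeasureTheory.integral_const_mul, integral_physHermite_sq,
    inv_mul_cancel₀ (hermN_pos n).ne']

section Sk
variable (k : ℕ)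

noncomputable def Sfun (k : ℕ) (x : ℝ) : ℝ := ∑ i ∈ Finset.range k, hermiteFun i x ^ 2

lemma Sfun_nonneg (x : ℝ) : 0 ≤ Sfun k x :=
  Finset.sum_nonneg fun i _ => sq_nonneg _
lemma continuous_Sfun : Continuous (Sfun k) :=
  continuous_finset_sum _ fun i _ => continuous_hermiteFun_sq i
lemma integrable_Sfun : Integrable (Sfun k) :=
  MeasureTheory.integrable_finset_sum _ fun i _ => integrable_hermiteFun_sq i
lemma integral_Sfun : ∫ x, Sfun k x = k := by
  have h : ∫ x, ∑ i ∈ Finset.range k, hermiteFun i x ^ 2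
      = ∑ i ∈ Finset.range k, ∫ x, hermiteFun i x ^ 2 :=
    integral_finset_sum _ fun i _ => integrable_hermiteFun_sq i
  show ∫ x, ∑ i ∈ Finset.range k, hermiteFun i x ^ 2 = (k:ℝ)
  rw [h]
  simp [integral_hermiteFun_sq]
lemma Sfun_le : ∀ (k : ℕ) (x : ℝ), Sfun k x ≤ 4 * (k:ℝ) ^ 2 := by
  intro k
  induction k with
  | zero => intro x; simp [Sfun]
  | succ m ih =>
    intro x
    have h1 : Sfun (m+1) x = Sfun m x + hermiteFun m x ^ 2 := by
      rw [Sfun, Sfun, Finset.sum_range_succ]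
    rw [h1]
    have h2 := hermiteFun_sq_le m x
    have h3 := ih x
    push_cast
    nlinarith [h2, h3]

lemma integrable_Sfun_sq : Integrable (fun x => Sfun k x ^ 2) := by
  apply Integrable.mono' ((integrable_Sfun k).const_mul (4 * (k:ℝ) ^ 2))
  · exact ((continuous_Sfun k).pow 2).aestronglyMeasurable
  · apply Filter.Eventually.of_forall
    intro x
    rw [Real.norm_eq_abs, abs_of_nonneg (sq_nonneg _)]
    nlinarith [Sfun_le k x, Sfun_nonneg k x]

lemma integral_Sfun_sq_le : ∫ x, Sfun k x ^ 2 ≤ 4 * (k:ℝ) ^ 3 := by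
  have h : ∫ x, Sfun k x ^ 2 ≤ ∫ x, 4 * (k:ℝ) ^ 2 * Sfun k x := by
    apply integral_mono (integrable_Sfun_sq k) ((integrable_Sfun k).const_mul _)
    intro x
    show Sfun k x ^ 2 ≤ 4 * (k:ℝ) ^ 2 * Sfun k x
    nlinarith [Sfun_le k x, Sfun_nonneg k x]
  rw [MeasureTheory.integral_const_mul, integral_Sfun] at h
  calc ∫ x, Sfun k x ^ 2 ≤ 4 * (k:ℝ) ^ 2 * k := h
    _ = 4 * (k:ℝ) ^ 3 := by ring
end Sk

lemma expectation_le {Ω : Type*} [MeasurableSpace Ω] (P : Measure Ω) [IsProbabilityMeasure P]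
    (Y : Ω → ℝ) (hY : Measurable Y) (f : ℝ → ℝ) (c : ℝ) (hc : 0 ≤ c)
    (hmap : Measure.map Y P = volume.withDensity fun y => ENNReal.ofReal (f y))
    (hf : ∀ y, 0 ≤ f y ∧ f y ≤ c) (k : ℕ) :
    ∫ ω, (∑ i ∈ Finset.range k, hermiteFun i (Y ω) ^ 2) ^ 2 ∂P ≤ c * (4 * (k:ℝ) ^ 3) := by
  set G : ℝ → ℝ := fun y => Sfun k y ^ 2 with hG
  have hGc : Continuous G := (continuous_Sfun k).pow 2
  have hint : ∫ ω, (∑ i ∈ Finset.range k, hermiteFun i (Y ω) ^ 2) ^ 2 ∂P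
      = ∫ ω, G (Y ω) ∂P := rfl
  rw [hint]
  have h1 : ∫ ω, G (Y ω) ∂P = (∫⁻ ω, ENNReal.ofReal (G (Y ω)) ∂P).toReal :=
    integral_eq_lintegral_of_nonneg_ae (Filter.Eventually.of_forall fun ω => sq_nonneg _)
      ((hGc.measurable.comp hY).aestronglyMeasurable)
  have h2 : ∫⁻ ω, ENNReal.ofReal (G (Y ω)) ∂P = ∫⁻ y, ENNReal.ofReal (G y) ∂(Measure.map Y P) :=
    (lintegral_map (ENNReal.measurable_ofReal.comp hGc.measurable) hY).symm
  have h3 : Measure.map Y P ≤ (ENNReal.ofReal c) • (volume : Measure ℝ) := by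
    rw [hmap, ← withDensity_const]
    exact withDensity_mono (Filter.Eventually.of_forall fun y =>
      ENNReal.ofReal_le_ofReal (hf y).2)
  have h4 : ∫⁻ y, ENNReal.ofReal (G y) ∂(Measure.map Y P)
      ≤ ENNReal.ofReal c * ∫⁻ y, ENNReal.ofReal (G y) := by
    calc ∫⁻ y, ENNReal.ofReal (G y) ∂(Measure.map Y P)
        ≤ ∫⁻ y, ENNReal.ofReal (G y) ∂((ENNReal.ofReal c) • volume) := lintegral_mono' h3 le_rfl
      _ = ENNReal.ofReal c * ∫⁻ y, ENNReal.ofReal (G y) := lintegral_smul_measure _ _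
  have h5 : ∫⁻ y, ENNReal.ofReal (G y) = ENNReal.ofReal (∫ y, G y) :=
    (ofReal_integral_eq_lintegral_ofReal (integrable_Sfun_sq k)
      (Filter.Eventually.of_forall fun y => sq_nonneg _)).symm
  have hGnn : 0 ≤ ∫ y, G y := integral_nonneg fun y => sq_nonneg _
  rw [h1, h2]
  have h6 : (∫⁻ y, ENNReal.ofReal (G y) ∂(Measure.map Y P)).toReal
      ≤ (ENNReal.ofReal c * ENNReal.ofReal (∫ y, G y)).toReal := by
    apply ENNReal.toReal_mono
    · exact ENNReal.mul_ne_top ENNReal.ofReal_ne_top ENNReal.ofReal_ne_top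
    · rw [← h5]; exact h4
  calc (∫⁻ y, ENNReal.ofReal (G y) ∂(Measure.map Y P)).toReal
      ≤ (ENNReal.ofReal c * ENNReal.ofReal (∫ y, G y)).toReal := h6
    _ = c * ∫ y, G y := by
        rw [← ENNReal.ofReal_mul hc, ENNReal.toReal_ofReal (mul_nonneg hc hGnn)]
    _ ≤ c * (4 * (k:ℝ) ^ 3) := by
        apply mul_le_mul_of_nonneg_left _ hc
        exact integral_Sfun_sq_le k

lemma sum_rsqrt_le : ∀ n : ℕ, ∑ t ∈ Finset.Icc 1 n, ((t:ℝ)) ^ (-(1:ℝ)/2) ≤ 2 * Real.sqrt n := by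
  intro n
  induction n with
  | zero => simp
  | succ m ih =>
    rw [Finset.sum_Icc_succ_top (by omega : 1 ≤ m + 1)]
    set s := Real.sqrt m with hsdef
    set u := Real.sqrt ((m:ℝ) + 1) with hudef
    have hs : s ^ 2 = m := Real.sq_sqrt (Nat.cast_nonneg m)
    have hsnn : 0 ≤ s := Real.sqrt_nonneg _
    have hu : u ^ 2 = (m:ℝ) + 1 := Real.sq_sqrt (by positivity)
    have hup : 0 < u := Real.sqrt_pos.mpr (by positivity)
    have hterm : ((m+1 : ℕ):ℝ) ^ (-(1:ℝ)/2) = u⁻¹ := by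
      push_cast
      rw [show (-(1:ℝ)/2) = -(1/2) by norm_num,
        Real.rpow_neg (by positivity), ← Real.sqrt_eq_rpow]
    have hcast : Real.sqrt ((m+1 : ℕ):ℝ) = u := by push_cast; rfl
    rw [hterm, hcast]
    have key : 2 * s * u + 1 ≤ 2 * u ^ 2 := by nlinarith [sq_nonneg (s - u)]
    have hfinal : 2 * s + u⁻¹ ≤ 2 * u := by
      have e1 : 2 * s + u⁻¹ = (2 * s * u + 1) / u := by field_simp
      have e2 : 2 * u = (2 * u ^ 2) / u := by field_simp
      rw [e1, e2]
      exact (div_le_div_iff_of_pos_right hup).mpr key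
    linarith [ih, hfinal]

/-- Conditional Lindeberg bound used in the CLT for the plug-in estimator: if each `X_t`
has a Lebesgue density bounded by `C₀ t^{-1/2}` and `k_n = ⌊a n^κ⌋` with `κ ∈ (0, 1/8)`,
then `(1/n) Σ_{t=1}^n E[(Σ_{i<k_n} ℋ_i(X_t)²)²] → 0`. -/
theorem lindeberg_bound
    {Ω : Type*} [MeasurableSpace Ω] (P : Measure Ω) [IsProbabilityMeasure P]
    (X : ℕ → Ω → ℝ) (hmeas : ∀ t, Measurable (X t))
    (C₀ : ℝ) (hC₀ : 0 < C₀)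
    (hdens : ∀ t : ℕ, 1 ≤ t → ∃ f : ℝ → ℝ,
      (Measure.map (X t) P = volume.withDensity fun y => ENNReal.ofReal (f y)) ∧
      ∀ y : ℝ, 0 ≤ f y ∧ f y ≤ C₀ * (t : ℝ) ^ (-(1 : ℝ) / 2))
    (a κ : ℝ) (ha : 0 < a) (hκ0 : 0 < κ) (hκ : κ < 1 / 8) :
    Tendsto
      (fun n : ℕ =>
        (1 / (n : ℝ)) * ∑ t ∈ Finset.Icc 1 n,
          ∫ ω, (∑ i ∈ Finset.range ⌊a * (n : ℝ) ^ κ⌋₊,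
            hermiteFun i (X t ω) ^ 2) ^ 2 ∂P)
      atTop (nhds 0) := by
  set A : ℕ → ℝ := fun n =>
    (1 / (n : ℝ)) * ∑ t ∈ Finset.Icc 1 n,
      ∫ ω, (∑ i ∈ Finset.range ⌊a * (n : ℝ) ^ κ⌋₊,
        hermiteFun i (X t ω) ^ 2) ^ 2 ∂P with hA
  have hlb : ∀ n, 0 ≤ A n := by
    intro n
    apply mul_nonneg (by positivity)
    exact Finset.sum_nonneg fun t _ => integral_nonneg fun ω => sq_nonneg _
  have hub : ∀ n : ℕ, 1 ≤ n → A n ≤ (8 * C₀ * a ^ 3) * (n:ℝ) ^ (3*κ - 1/2) := by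
    intro n hn
    have hn0 : (0:ℝ) < n := by exact_mod_cast hn
    set k : ℕ := ⌊a * (n : ℝ) ^ κ⌋₊ with hk
    have hsum : ∑ t ∈ Finset.Icc 1 n,
        ∫ ω, (∑ i ∈ Finset.range k, hermiteFun i (X t ω) ^ 2) ^ 2 ∂P
        ≤ ∑ t ∈ Finset.Icc 1 n, (C₀ * (4 * (k:ℝ) ^ 3)) * ((t:ℝ)) ^ (-(1:ℝ)/2) := by
      apply Finset.sum_le_sum
      intro t ht
      have ht1 : 1 ≤ t := (Finset.mem_Icc.mp ht).1
      obtain ⟨f, hmapf, hff⟩ := hdens t ht1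
      have ht0 : (0:ℝ) < t := by exact_mod_cast ht1
      have hc : 0 ≤ C₀ * (t:ℝ) ^ (-(1:ℝ)/2) := by positivity
      have h := expectation_le P (X t) (hmeas t) f _ hc hmapf hff k
      calc ∫ ω, (∑ i ∈ Finset.range k, hermiteFun i (X t ω) ^ 2) ^ 2 ∂P
          ≤ (C₀ * (t:ℝ) ^ (-(1:ℝ)/2)) * (4 * (k:ℝ) ^ 3) := h
        _ = (C₀ * (4 * (k:ℝ) ^ 3)) * ((t:ℝ)) ^ (-(1:ℝ)/2) := by ring
    rw [← Finset.mul_sum] at hsum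
    have hcnn : (0:ℝ) ≤ C₀ * (4 * (k:ℝ) ^ 3) := by positivity
    have hsum2 : ∑ t ∈ Finset.Icc 1 n,
        ∫ ω, (∑ i ∈ Finset.range k, hermiteFun i (X t ω) ^ 2) ^ 2 ∂P
        ≤ (C₀ * (4 * (k:ℝ) ^ 3)) * (2 * Real.sqrt n) :=
      le_trans hsum (mul_le_mul_of_nonneg_left (sum_rsqrt_le n) hcnn)
    have hAle : A n ≤ (1 / (n:ℝ)) * ((C₀ * (4 * (k:ℝ) ^ 3)) * (2 * Real.sqrt n)) := by
      rw [hA]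
      exact mul_le_mul_of_nonneg_left hsum2 (by positivity)
    -- now k ≤ a n^κ
    have hkle : (k:ℝ) ≤ a * (n:ℝ) ^ κ := Nat.floor_le (by positivity)
    have hk3 : (k:ℝ) ^ 3 ≤ (a * (n:ℝ) ^ κ) ^ 3 :=
      pow_le_pow_left₀ (Nat.cast_nonneg k) hkle 3
    have hstep : (1 / (n:ℝ)) * ((C₀ * (4 * (k:ℝ) ^ 3)) * (2 * Real.sqrt n))
        ≤ (1 / (n:ℝ)) * ((C₀ * (4 * (a * (n:ℝ) ^ κ) ^ 3)) * (2 * Real.sqrt n)) := by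
      gcongr
    have hval : (1 / (n:ℝ)) * ((C₀ * (4 * (a * (n:ℝ) ^ κ) ^ 3)) * (2 * Real.sqrt n))
        = (8 * C₀ * a ^ 3) * (n:ℝ) ^ (3*κ - 1/2) := by
      have e1 : ((n:ℝ) ^ κ) ^ (3:ℕ) = (n:ℝ) ^ (κ * 3) := by
        rw [← Real.rpow_natCast ((n:ℝ) ^ κ) 3, ← Real.rpow_mul hn0.le]
        norm_num
      have e2 : Real.sqrt (n:ℝ) = (n:ℝ) ^ ((1:ℝ)/2) := Real.sqrt_eq_rpow _
      have e3 : (1 / (n:ℝ)) = (n:ℝ) ^ (-(1:ℝ)) := by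
        rw [Real.rpow_neg hn0.le, Real.rpow_one, one_div]
      rw [mul_pow, e1, e2, e3]
      rw [show (3*κ - 1/2 : ℝ) = κ * 3 + ((1:ℝ)/2 + (-(1:ℝ))) by ring,
        Real.rpow_add hn0, Real.rpow_add hn0]
      ring
    calc A n ≤ (1 / (n:ℝ)) * ((C₀ * (4 * (k:ℝ) ^ 3)) * (2 * Real.sqrt n)) := hAle
      _ ≤ (1 / (n:ℝ)) * ((C₀ * (4 * (a * (n:ℝ) ^ κ) ^ 3)) * (2 * Real.sqrt n)) := hstep
      _ = (8 * C₀ * a ^ 3) * (n:ℝ) ^ (3*κ - 1/2) := hval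
  have htend : Tendsto (fun n : ℕ => (8 * C₀ * a ^ 3) * (n:ℝ) ^ (3*κ - 1/2)) atTop (nhds 0) := by
    have h1 : Tendsto (fun x : ℝ => x ^ (-(1/2 - 3*κ))) atTop (nhds 0) :=
      tendsto_rpow_neg_atTop (by linarith)
    have h2 : Tendsto (fun n : ℕ => ((n:ℝ)) ^ (3*κ - 1/2)) atTop (nhds 0) := by
      have h3 := h1.comp (tendsto_natCast_atTop_atTop (R := ℝ))
      have h4 : (fun n : ℕ => ((n:ℝ)) ^ (3*κ - 1/2))
          = (fun x : ℝ => x ^ (-(1/2 - 3*κ))) ∘ (fun n : ℕ => (n:ℝ)) := by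
        funext n
        simp only [Function.comp_apply]
        norm_num
      rw [h4]
      exact h3
    have := h2.const_mul (8 * C₀ * a ^ 3)
    simpa using this
  apply squeeze_zero' (Filter.Eventually.of_forall hlb)
    (Filter.eventually_atTop.mpr ⟨1, hub⟩) htend
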